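/- Let (aₙ)_{n≥0} be the Taylor coefficients of κ₁ at 0, i.e., κ₁(t) = ∑_{n≥0} aₙ tⁿ on (-1,1). Then all aₙ are nonnegative, a₁ > 0, and ∑_{n≥0} aₙ = κ₁(1) = 1. -/

import Mathlib

set_option maxHeartbeats 1000000

/-- The degree-one arc-cosine kernel. -/
noncomputable def kappa1 (u : ℝ) : ℝ :=
  (Real.sqrt (1 - u ^ 2) + (Real.pi - Real.arccos u) * u) / Real.pi

open scoped Topology NNReal ENNReal
open Filter Set

noncomputable section AK
namespace AK

/-- central binomial coefficient over `4^k`. -/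
def cb (k : ℕ) : ℝ := (Nat.centralBinom k : ℝ) / 4 ^ k

lemma cb_pos (k : ℕ) : 0 < cb k :=
  div_pos (by exact_mod_cast Nat.centralBinom_pos k) (by positivity)

lemma cb_zero : cb 0 = 1 := by simp [cb, Nat.centralBinom_zero]

lemma cb_rec (k : ℕ) : (2 * (k : ℝ) + 2) * cb (k + 1) = (2 * k + 1) * cb k := by
  have h' : ((k : ℝ) + 1) * (Nat.centralBinom (k + 1) : ℝ)
      = 2 * (2 * k + 1) * (Nat.centralBinom k : ℝ) := by
    exact_mod_cast Nat.succ_mul_centralBinom_succ k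
  have h4 : (4 : ℝ) ^ k ≠ 0 := by positivity
  unfold cb
  rw [pow_succ, mul_div_assoc', mul_div_assoc', div_eq_div_iff (by positivity) (by positivity)]
  linear_combination (2 * (4 : ℝ) ^ k) * h'

lemma cb_le_one (k : ℕ) : cb k ≤ 1 := by
  induction k with
  | zero => simp [cb_zero]
  | succ n ih =>
    have h := cb_rec n
    have hp := cb_pos n
    have hp1 := cb_pos (n + 1)
    nlinarith

lemma abs_cb_le_one (k : ℕ) : |cb k| ≤ 1 := by
  rw [abs_of_pos (cb_pos k)]; exact cb_le_one k

/-- geometric-type summability with a linear factor -/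
lemma summable_linear {r : ℝ} (hr0 : 0 ≤ r) (hr : r < 1) :
    Summable (fun k : ℕ => ((k : ℝ) + 1) * r ^ k) := by
  have h1 : Summable (fun k : ℕ => (k : ℝ) * r ^ k) := by
    have := summable_pow_mul_geometric_of_norm_lt_one (R := ℝ) 1 (r := r)
      (by rwa [Real.norm_eq_abs, abs_of_nonneg hr0])
    simpa using this
  have h2 : Summable (fun k : ℕ => r ^ k) := summable_geometric_of_lt_one hr0 hr
  simpa [add_mul] using h1.add h2

lemma summable_pow_of_le {x : ℝ} (hx : |x| < 1) {d : ℕ → ℝ} (hd : ∀ k, |d k| ≤ 1)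
    {e : ℕ → ℕ} (he : ∀ k, k ≤ e k) : Summable (fun k => d k * x ^ e k) := by
  refine Summable.of_norm_bounded (g := fun k => |x| ^ k)
    (summable_geometric_of_lt_one (abs_nonneg x) hx) (fun k => ?_)
  have h1 : ‖d k * x ^ e k‖ = |d k| * |x| ^ e k := by
    rw [Real.norm_eq_abs, abs_mul, abs_pow]
  rw [h1]
  calc |d k| * |x| ^ e k ≤ 1 * |x| ^ e k := by
        have := pow_nonneg (abs_nonneg x) (e k)
        exact mul_le_mul_of_nonneg_right (hd k) this
    _ = |x| ^ e k := one_mul _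
    _ ≤ |x| ^ k := pow_le_pow_of_le_one (abs_nonneg x) hx.le (he k)


lemma summable_aux2 {r : ℝ} (hr0 : 0 ≤ r) (hr : r < 1) :
    Summable (fun k : ℕ => (2 * (k : ℝ) + 4) * r ^ (k - 1)) := by
  have h1 : Summable (fun k : ℕ => (2 * ((k : ℝ) + 1) + 4) * r ^ k) := by
    have ha := (summable_linear hr0 hr).mul_left 2
    have hb := (summable_geometric_of_lt_one hr0 hr).mul_left 4
    exact (ha.add hb).congr fun k => by ring
  refine (summable_nat_add_iff 1).mp ?_
  refine h1.congr fun k => ?_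
  push_cast
  ring_nf

lemma hasDerivAt_tsum_pow {d : ℕ → ℝ} (hd : ∀ k, |d k| ≤ 1) {e : ℕ → ℕ}
    (he : ∀ k, k ≤ e k) (he2 : ∀ k, e k ≤ 2 * k + 2) {x : ℝ} (hx : |x| < 1) :
    HasDerivAt (fun y => ∑' k, d k * y ^ e k)
      (∑' k, d k * ((e k : ℝ) * x ^ (e k - 1))) x := by
  set r : ℝ := (|x| + 1) / 2 with hr
  have hxr : |x| < r := by rw [hr]; linarith
  have hr0 : 0 < r := lt_of_le_of_lt (abs_nonneg x) hxr
  have hr1 : r < 1 := by rw [hr]; linarith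
  have hu : Summable (fun k : ℕ => (2 * (k : ℝ) + 4) * r ^ (k - 1)) := by
    have h1 : Summable (fun k : ℕ => (2 * ((k : ℝ) + 1) + 4) * r ^ k) := by
      have ha := (summable_linear hr0.le hr1).mul_left 2
      have hb := (summable_geometric_of_lt_one hr0.le hr1).mul_left 4
      have := ha.add hb
      refine this.congr fun k => ?_
      ring
    refine (summable_nat_add_iff 1).mp ?_
    refine h1.congr fun k => ?_
    push_cast
    ring_nf
  refine hasDerivAt_tsum_of_isPreconnected hu (isOpen_Ioo (a := -r) (b := r))
    ((convex_Ioo _ _).isPreconnected)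
    (fun k y _ => (hasDerivAt_pow (e k) y).const_mul (d k))
    (fun k y hy => ?_) (abs_lt.mp hxr |> fun h => ⟨h.1, h.2⟩)
    (summable_pow_of_le hx hd he) (abs_lt.mp hxr |> fun h => ⟨h.1, h.2⟩)
  have hyr : |y| ≤ r := by
    rw [abs_le]; exact ⟨hy.1.le, hy.2.le⟩
  have h1 : ‖d k * ((e k : ℝ) * y ^ (e k - 1))‖ ≤ 1 * ((e k : ℝ) * r ^ (e k - 1)) := by
    rw [Real.norm_eq_abs, abs_mul, abs_mul, abs_pow]
    gcongr
    · exact hd k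
    · simp
  have h2 : (e k : ℝ) * r ^ (e k - 1) ≤ (2 * (k : ℝ) + 4) * r ^ (k - 1) := by
    have h2a : (e k : ℝ) ≤ 2 * (k : ℝ) + 4 := by
      have : e k ≤ 2 * k + 4 := le_trans (he2 k) (by omega)
      exact_mod_cast le_trans (Nat.cast_le.mpr this) (by push_cast; linarith)
    have h2b : r ^ (e k - 1) ≤ r ^ (k - 1) :=
      pow_le_pow_of_le_one hr0.le hr1.le (Nat.sub_le_sub_right (he k) 1)
    exact mul_le_mul h2a h2b (by positivity) (by positivity)
  calc ‖d k * ((e k : ℝ) * y ^ (e k - 1))‖ ≤ 1 * ((e k : ℝ) * r ^ (e k - 1)) := h1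
    _ = (e k : ℝ) * r ^ (e k - 1) := one_mul _
    _ ≤ (2 * (k : ℝ) + 4) * r ^ (k - 1) := h2

def FF (x : ℝ) : ℝ := ∑' k, cb k * x ^ (2 * k)
def DD (x : ℝ) : ℝ := ∑' k, cb k * (((2 * k : ℕ) : ℝ) * x ^ (2 * k - 1))
def AA (x : ℝ) : ℝ := ∑' k, cb k / (2 * (k : ℝ) + 1) * x ^ (2 * k + 1)
def BB (x : ℝ) : ℝ := ∑' k, cb k / ((2 * (k : ℝ) + 1) * (2 * (k : ℝ) + 2)) * x ^ (2 * k + 2)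

lemma dA_le (k : ℕ) : |cb k / (2 * (k : ℝ) + 1)| ≤ 1 := by
  rw [abs_div]
  rw [abs_of_pos (cb_pos k), abs_of_pos (by positivity : (0:ℝ) < 2 * (k:ℝ) + 1)]
  rw [div_le_one (by positivity)]
  calc cb k ≤ 1 := cb_le_one k
    _ ≤ 2 * (k : ℝ) + 1 := by have := Nat.cast_nonneg (α := ℝ) k; linarith

lemma dB_le (k : ℕ) : |cb k / ((2 * (k : ℝ) + 1) * (2 * (k : ℝ) + 2))| ≤ 1 := by
  rw [abs_div]
  rw [abs_of_pos (cb_pos k), abs_of_pos (by positivity : (0:ℝ) < (2 * (k:ℝ) + 1) * (2 * (k:ℝ) + 2))]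
  rw [div_le_one (by positivity)]
  calc cb k ≤ 1 := cb_le_one k
    _ ≤ (2 * (k : ℝ) + 1) * (2 * (k : ℝ) + 2) := by nlinarith [Nat.cast_nonneg (α := ℝ) k]

lemma hasDerivAt_FF {x : ℝ} (hx : |x| < 1) : HasDerivAt FF (DD x) x := by
  have := hasDerivAt_tsum_pow abs_cb_le_one (e := fun k => 2 * k)
    (fun k => by show k ≤ 2 * k; omega) (fun k => by show 2 * k ≤ 2 * k + 2; omega) hx
  exact this

lemma hasDerivAt_AA {x : ℝ} (hx : |x| < 1) : HasDerivAt AA (FF x) x := by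
  have := hasDerivAt_tsum_pow dA_le (e := fun k => 2 * k + 1)
    (fun k => by show k ≤ 2 * k + 1; omega) (fun k => by show 2 * k + 1 ≤ 2 * k + 2; omega) hx
  have heq : (∑' k, cb k / (2 * (k : ℝ) + 1) * (((2 * k + 1 : ℕ) : ℝ) * x ^ (2 * k + 1 - 1)))
      = FF x := by
    refine tsum_congr fun k => ?_
    have h1 : (0:ℝ) < 2 * (k : ℝ) + 1 := by positivity
    push_cast
    field_simp
  rw [heq] at this
  exact this

lemma hasDerivAt_BB {x : ℝ} (hx : |x| < 1) : HasDerivAt BB (AA x) x := by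
  have := hasDerivAt_tsum_pow dB_le (e := fun k => 2 * k + 2)
    (fun k => by show k ≤ 2 * k + 2; omega) (fun k => le_refl _) hx
  have heq : (∑' k, cb k / ((2 * (k : ℝ) + 1) * (2 * (k : ℝ) + 2)) *
      (((2 * k + 2 : ℕ) : ℝ) * x ^ (2 * k + 2 - 1))) = AA x := by
    refine tsum_congr fun k => ?_
    have h1 : (0:ℝ) < 2 * (k : ℝ) + 1 := by positivity
    have h2 : (0:ℝ) < 2 * (k : ℝ) + 2 := by positivity
    push_cast
    field_simp
  rw [heq] at this
  exact this


lemma summable_FF {x : ℝ} (hx : |x| < 1) : Summable (fun k => cb k * x ^ (2 * k)) :=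
  summable_pow_of_le hx abs_cb_le_one (fun k => by show k ≤ 2 * k; omega)

lemma summable_DD {x : ℝ} (hx : |x| < 1) :
    Summable (fun k => cb k * (((2 * k : ℕ) : ℝ) * x ^ (2 * k - 1))) := by
  refine Summable.of_norm_bounded (summable_aux2 (abs_nonneg x) hx) (fun k => ?_)
  rw [Real.norm_eq_abs, abs_mul, abs_mul, abs_pow]
  have hnn : (0:ℝ) ≤ |((2 * k : ℕ) : ℝ)| * |x| ^ (2 * k - 1) := by positivity
  have h1 : |cb k| * (|((2 * k : ℕ) : ℝ)| * |x| ^ (2 * k - 1))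
      ≤ 1 * (|((2 * k : ℕ) : ℝ)| * |x| ^ (2 * k - 1)) :=
    mul_le_mul_of_nonneg_right (abs_cb_le_one k) hnn
  refine h1.trans ?_
  rw [one_mul, abs_of_nonneg (by positivity : (0:ℝ) ≤ ((2 * k : ℕ) : ℝ))]
  have h2a : (((2 * k : ℕ) : ℝ)) ≤ 2 * (k : ℝ) + 4 := by push_cast; linarith
  have h2b : |x| ^ (2 * k - 1) ≤ |x| ^ (k - 1) :=
    pow_le_pow_of_le_one (abs_nonneg x) hx.le (by omega)
  exact mul_le_mul h2a h2b (by positivity) (by positivity)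

lemma ode {x : ℝ} (hx : |x| < 1) : (1 - x ^ 2) * DD x = x * FF x := by
  have hF : HasSum (fun k => cb k * x ^ (2 * k)) (FF x) := (summable_FF hx).hasSum
  have hD : HasSum (fun k => cb k * (((2 * k : ℕ) : ℝ) * x ^ (2 * k - 1))) (DD x) :=
    (summable_DD hx).hasSum
  have hD' : HasSum (fun k => cb k * (((2 * k : ℕ) : ℝ) * x ^ (2 * k - 1)))
      (DD x + ∑ i ∈ Finset.range 1, cb i * (((2 * i : ℕ) : ℝ) * x ^ (2 * i - 1))) := by
    simpa using hD
  have hD1 : HasSum (fun k => cb (k + 1) * (((2 * (k + 1) : ℕ) : ℝ) * x ^ (2 * (k + 1) - 1)))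
      (DD x) := (hasSum_nat_add_iff 1).mpr hD'
  have eq1 : (fun k => cb (k + 1) * (((2 * (k + 1) : ℕ) : ℝ) * x ^ (2 * (k + 1) - 1)))
      = (fun k : ℕ => (2 * (k : ℝ) + 1) * cb k * x ^ (2 * k + 1)) := by
    funext k
    have h := cb_rec k
    simp only [show 2 * (k + 1) - 1 = 2 * k + 1 from by omega]
    push_cast
    linear_combination x ^ (2 * k + 1) * h
  rw [eq1] at hD1
  have eq2 : (fun k : ℕ => x * (cb k * x ^ (2 * k))) = (fun k : ℕ => cb k * x ^ (2 * k + 1)) := by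
    funext k; rw [pow_succ]; ring
  have hxF := hF.mul_left x
  rw [eq2] at hxF
  have hsub := hD1.sub hxF
  have eq3 : (fun k : ℕ => (2 * (k : ℝ) + 1) * cb k * x ^ (2 * k + 1) - cb k * x ^ (2 * k + 1))
      = (fun k : ℕ => 2 * (k : ℝ) * cb k * x ^ (2 * k + 1)) := by
    funext k; ring
  rw [eq3] at hsub
  have hsub' : HasSum (fun k : ℕ => 2 * (k : ℝ) * cb k * x ^ (2 * k + 1))
      (DD x - x * FF x + ∑ i ∈ Finset.range 1, 2 * (i : ℝ) * cb i * x ^ (2 * i + 1)) := by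
    simpa using hsub
  have hsub1 : HasSum (fun k : ℕ => 2 * ((k : ℝ) + 1) * cb (k + 1) * x ^ (2 * (k + 1) + 1))
      (DD x - x * FF x) := by
    have h5 := (hasSum_nat_add_iff 1).mpr hsub'
    have : (fun k : ℕ => 2 * (((k + 1 : ℕ)) : ℝ) * cb (k + 1) * x ^ (2 * (k + 1) + 1))
        = (fun k : ℕ => 2 * ((k : ℝ) + 1) * cb (k + 1) * x ^ (2 * (k + 1) + 1)) := by
      funext k; push_cast; ring
    rwa [this] at h5
  have eq4 : (fun k : ℕ => 2 * ((k : ℝ) + 1) * cb (k + 1) * x ^ (2 * (k + 1) + 1))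
      = (fun k : ℕ => (2 * (k : ℝ) + 1) * cb k * x ^ (2 * k + 3)) := by
    funext k
    have h := cb_rec k
    simp only [show 2 * (k + 1) + 1 = 2 * k + 3 from by omega]
    linear_combination x ^ (2 * k + 3) * h
  rw [eq4] at hsub1
  have hmul := hD1.mul_right (x ^ 2)
  have eq5 : (fun k : ℕ => (2 * (k : ℝ) + 1) * cb k * x ^ (2 * k + 1) * x ^ 2)
      = (fun k : ℕ => (2 * (k : ℝ) + 1) * cb k * x ^ (2 * k + 3)) := by
    funext k
    ring
  rw [eq5] at hmul
  have key : DD x - x * FF x = DD x * x ^ 2 := hsub1.unique hmul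
  linear_combination key

lemma FF_zero : FF 0 = 1 := by
  unfold FF
  rw [tsum_eq_single 0 (fun k hk => by simp [zero_pow, Nat.mul_ne_zero, hk])]
  simp [cb_zero]

lemma eq_at_zero_of_deriv_zero {f : ℝ → ℝ} (hf : ∀ x ∈ Ioo (-1 : ℝ) 1, HasDerivAt f 0 x)
    {x : ℝ} (hx : x ∈ Ioo (-1 : ℝ) 1) : f x = f 0 := by
  have h0 : (0 : ℝ) ∈ Ioo (-1 : ℝ) 1 := by constructor <;> norm_num
  have hb := Convex.norm_image_sub_le_of_norm_hasDerivWithin_le (f := f)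
    (f' := fun _ => (0 : ℝ)) (C := 0)
    (fun y hy => (hf y hy).hasDerivWithinAt) (fun y _ => by simp) (convex_Ioo _ _) h0 hx
  have : ‖f x - f 0‖ ≤ 0 := by simpa using hb
  have h2 := norm_le_zero_iff.mp this
  exact sub_eq_zero.mp h2

lemma abs_lt_one_of_mem {x : ℝ} (hx : x ∈ Ioo (-1 : ℝ) 1) : |x| < 1 := by
  rw [abs_lt]; exact ⟨hx.1, hx.2⟩

lemma one_sub_sq_pos {x : ℝ} (hx : x ∈ Ioo (-1 : ℝ) 1) : (0 : ℝ) < 1 - x ^ 2 := by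
  nlinarith [hx.1, hx.2]

lemma hasDerivAt_sqrt1 {x : ℝ} (hx : x ∈ Ioo (-1 : ℝ) 1) :
    HasDerivAt (fun y : ℝ => Real.sqrt (1 - y ^ 2)) (-x / Real.sqrt (1 - x ^ 2)) x := by
  have h1 : (0 : ℝ) < 1 - x ^ 2 := one_sub_sq_pos hx
  have hs : (0 : ℝ) < Real.sqrt (1 - x ^ 2) := Real.sqrt_pos.mpr h1
  have hinner : HasDerivAt (fun y : ℝ => 1 - y ^ 2) (-(2 * x)) x := by
    simpa using ((hasDerivAt_pow 2 x).const_sub 1)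
  have := (Real.hasDerivAt_sqrt h1.ne').comp x hinner
  convert this using 1
  · rfl
  · rfl
  · rfl
  field_simp

lemma FF_mul_sqrt {x : ℝ} (hx : x ∈ Ioo (-1 : ℝ) 1) :
    FF x * Real.sqrt (1 - x ^ 2) = 1 := by
  have key : ∀ y ∈ Ioo (-1 : ℝ) 1,
      HasDerivAt (fun y => FF y * Real.sqrt (1 - y ^ 2)) 0 y := by
    intro y hy
    have h1 : (0 : ℝ) < 1 - y ^ 2 := one_sub_sq_pos hy
    have hs : (0 : ℝ) < Real.sqrt (1 - y ^ 2) := Real.sqrt_pos.mpr h1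
    have hd := (hasDerivAt_FF (abs_lt_one_of_mem hy)).mul (hasDerivAt_sqrt1 hy)
    convert hd using 1
    · rfl
    · rfl
    · rfl
    have hsq : Real.sqrt (1 - y ^ 2) ^ 2 = 1 - y ^ 2 := Real.sq_sqrt h1.le
    have ho := ode (abs_lt_one_of_mem hy)
    field_simp
    first
    | linear_combination DD y * hsq + ho
    | linear_combination -(DD y) * hsq - ho
    | linear_combination DD y * hsq - ho
    | linear_combination -(DD y) * hsq + ho
  have := eq_at_zero_of_deriv_zero key hx
  rw [this]
  simp [FF_zero]

lemma FF_eq {x : ℝ} (hx : x ∈ Ioo (-1 : ℝ) 1) : FF x = 1 / Real.sqrt (1 - x ^ 2) := by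
  have hs : (0 : ℝ) < Real.sqrt (1 - x ^ 2) := Real.sqrt_pos.mpr (one_sub_sq_pos hx)
  field_simp
  exact FF_mul_sqrt hx

lemma AA_zero : AA 0 = 0 := by
  unfold AA
  have : ∀ k : ℕ, cb k / (2 * (k : ℝ) + 1) * (0 : ℝ) ^ (2 * k + 1) = 0 := by
    intro k; simp
  rw [tsum_congr this, tsum_zero]

lemma AA_eq {x : ℝ} (hx : x ∈ Ioo (-1 : ℝ) 1) : AA x = Real.arcsin x := by
  have key : ∀ y ∈ Ioo (-1 : ℝ) 1,
      HasDerivAt (fun y => AA y - Real.arcsin y) 0 y := by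
    intro y hy
    have hd := (hasDerivAt_AA (abs_lt_one_of_mem hy)).sub
      (Real.hasDerivAt_arcsin hy.1.ne' hy.2.ne)
    have : FF y - 1 / Real.sqrt (1 - y ^ 2) = 0 := by rw [FF_eq hy]; ring
    rwa [this] at hd
  have := eq_at_zero_of_deriv_zero key hx
  have h0 : AA 0 - Real.arcsin 0 = 0 := by simp [AA_zero]
  have := this.trans h0
  linarith [sub_eq_zero.mp this]

lemma BB_zero : BB 0 = 0 := by
  unfold BB
  have : ∀ k : ℕ, cb k / ((2 * (k : ℝ) + 1) * (2 * (k : ℝ) + 2)) * (0 : ℝ) ^ (2 * k + 2) = 0 := by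
    intro k; simp
  rw [tsum_congr this, tsum_zero]

lemma BB_eq {x : ℝ} (hx : x ∈ Ioo (-1 : ℝ) 1) :
    BB x = Real.sqrt (1 - x ^ 2) + x * Real.arcsin x - 1 := by
  have key : ∀ y ∈ Ioo (-1 : ℝ) 1,
      HasDerivAt (fun y => BB y - (Real.sqrt (1 - y ^ 2) + y * Real.arcsin y)) 0 y := by
    intro y hy
    have h1 : (0 : ℝ) < 1 - y ^ 2 := one_sub_sq_pos hy
    have hs : (0 : ℝ) < Real.sqrt (1 - y ^ 2) := Real.sqrt_pos.mpr h1
    have hd2 : HasDerivAt (fun y : ℝ => y * Real.arcsin y)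
        (1 * Real.arcsin y + y * (1 / Real.sqrt (1 - y ^ 2))) y :=
      (hasDerivAt_id y).mul (Real.hasDerivAt_arcsin hy.1.ne' hy.2.ne)
    have hd := (hasDerivAt_BB (abs_lt_one_of_mem hy)).sub ((hasDerivAt_sqrt1 hy).add hd2)
    have hval : AA y - (-y / Real.sqrt (1 - y ^ 2)
        + (1 * Real.arcsin y + y * (1 / Real.sqrt (1 - y ^ 2)))) = 0 := by
      rw [AA_eq hy]
      field_simp
      ring
    rwa [hval] at hd
  have := eq_at_zero_of_deriv_zero key hx
  have h0 : BB 0 - (Real.sqrt (1 - 0 ^ 2) + 0 * Real.arcsin 0) = -1 := by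
    simp [BB_zero]
  rw [h0] at this
  have := sub_eq_iff_eq_add.mp this
  linarith


/-- the Taylor coefficients of `kappa1`. -/
def co : ℕ → ℝ
  | 0 => 1 / Real.pi
  | 1 => 1 / 2
  | (n + 2) => if n % 2 = 0 then
      cb (n / 2) / ((2 * ((n / 2 : ℕ) : ℝ) + 1) * (2 * ((n / 2 : ℕ) : ℝ) + 2) * Real.pi) else 0

lemma co_nonneg (n : ℕ) : 0 ≤ co n := by
  match n with
  | 0 => exact le_of_lt (by simp [co]; positivity)
  | 1 => norm_num [co]
  | (n + 2) =>
    simp only [co]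
    split
    · have := cb_pos (n / 2)
      have := Real.pi_pos
      positivity
    · exact le_rfl

lemma co_one : co 1 = 1 / 2 := rfl

lemma kappa1_one : kappa1 1 = 1 := by
  unfold kappa1
  rw [Real.arccos_one]
  norm_num [Real.pi_ne_zero]

lemma hasSum_co {t : ℝ} (ht : t ∈ Ioo (-1 : ℝ) 1) :
    HasSum (fun n => co n * t ^ n) (kappa1 t) := by
  have habs := abs_lt_one_of_mem ht
  have hBB : HasSum (fun k => cb k / ((2 * (k : ℝ) + 1) * (2 * (k : ℝ) + 2)) * t ^ (2 * k + 2))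
      (BB t) :=
    (summable_pow_of_le habs dB_le (e := fun k => 2 * k + 2)
      (fun k => by show k ≤ 2 * k + 2; omega)).hasSum
  have hBBpi := hBB.div_const Real.pi
  have hinj : Function.Injective (fun k : ℕ => 2 * k) := fun a b hab => by
    have : 2 * a = 2 * b := hab
    omega
  have hvanish : ∀ m ∉ Set.range (fun k : ℕ => 2 * k), co (m + 2) * t ^ (m + 2) = 0 := by
    intro m hm
    have hodd : m % 2 = 1 := by
      rcases Nat.even_or_odd m with he | ho
      · obtain ⟨r, rfl⟩ := he
        exact absurd ⟨r, by show 2 * r = r + r; ring⟩ hm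
      · exact Nat.odd_iff.mp ho
    simp [co, hodd]
  have hcomp : (fun k : ℕ => co (2 * k + 2) * t ^ (2 * k + 2))
      = (fun k => cb k / ((2 * (k : ℝ) + 1) * (2 * (k : ℝ) + 2)) * t ^ (2 * k + 2) / Real.pi) := by
    funext k
    have h2 : (2 * k) % 2 = 0 := by omega
    have h3 : (2 * k) / 2 = k := by omega
    simp only [co, h2, h3, if_true]
    have hX : ((2 * (k : ℝ) + 1) * (2 * (k : ℝ) + 2)) ≠ 0 := by positivity
    field_simp
  have step1 : HasSum (fun n : ℕ => co (n + 2) * t ^ (n + 2)) (BB t / Real.pi) := by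
    refine (Function.Injective.hasSum_iff hinj hvanish).mp ?_
    show HasSum ((fun n : ℕ => co (n + 2) * t ^ (n + 2)) ∘ (fun k : ℕ => 2 * k)) _
    have : ((fun n : ℕ => co (n + 2) * t ^ (n + 2)) ∘ (fun k : ℕ => 2 * k))
        = (fun k : ℕ => co (2 * k + 2) * t ^ (2 * k + 2)) := rfl
    rw [this, hcomp]
    exact hBBpi
  have step2 := (hasSum_nat_add_iff (f := fun n => co n * t ^ n) 2).mp step1
  have hsum2 : (∑ i ∈ Finset.range 2, co i * t ^ i) = 1 / Real.pi + t / 2 := by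
    rw [Finset.sum_range_succ, Finset.sum_range_one]
    show co 0 * t ^ 0 + co 1 * t ^ 1 = _
    rw [show co 0 = 1 / Real.pi from rfl, co_one]
    ring
  rw [hsum2] at step2
  have hval : BB t / Real.pi + (1 / Real.pi + t / 2) = kappa1 t := by
    rw [BB_eq ht]
    unfold kappa1
    rw [Real.arccos_eq_pi_div_two_sub_arcsin]
    field_simp
    ring
  rwa [hval] at step2

lemma hasFPS {c : ℕ → ℝ}
    (hc : ∀ t ∈ Ioo (-1 : ℝ) 1, HasSum (fun n => c n * t ^ n) (kappa1 t)) :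
    HasFPowerSeriesAt kappa1 (FormalMultilinearSeries.ofScalars ℝ c) 0 := by
  have h34 : (3 / 4 : ℝ) ∈ Ioo (-1 : ℝ) 1 := by norm_num
  have hs34 := (hc _ h34).summable
  have htend : Filter.Tendsto (fun n => c n * (3 / 4 : ℝ) ^ n) atTop (𝓝 0) :=
    hs34.tendsto_atTop_zero
  obtain ⟨C, hC0⟩ := htend.norm.bddAbove_range
  have hC : ∀ n, ‖c n * (3 / 4 : ℝ) ^ n‖ ≤ C := fun n => hC0 ⟨n, rfl⟩
  have hrad : ((1 / 2 : ℝ≥0) : ℝ≥0∞) ≤ (FormalMultilinearSeries.ofScalars ℝ c).radius := by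
    apply FormalMultilinearSeries.le_radius_of_bound _ C
    intro n
    rw [FormalMultilinearSeries.ofScalars_norm]
    have h1 : ((1 / 2 : ℝ≥0) : ℝ) ^ n ≤ (3 / 4 : ℝ) ^ n := by
      apply pow_le_pow_left₀ (by positivity)
      norm_num
    calc ‖c n‖ * ((1 / 2 : ℝ≥0) : ℝ) ^ n ≤ ‖c n‖ * (3 / 4 : ℝ) ^ n :=
          mul_le_mul_of_nonneg_left h1 (norm_nonneg _)
      _ = ‖c n * (3 / 4 : ℝ) ^ n‖ := by
          rw [norm_mul, norm_pow, Real.norm_eq_abs (3/4 : ℝ), abs_of_nonneg (by norm_num : (0:ℝ) ≤ 3/4)]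
      _ ≤ C := hC n
  refine ⟨((1 / 2 : ℝ≥0) : ℝ≥0∞), hrad, ?_, ?_⟩
  · exact_mod_cast (by norm_num : (0 : ℝ≥0) < 1 / 2)
  · intro y hy
    rw [mem_emetric_ball_zero_iff, enorm_lt_coe] at hy
    have hy' : ‖y‖ < ((1 / 2 : ℝ≥0) : ℝ) := hy
    have hmem : y ∈ Ioo (-1 : ℝ) 1 := by
      rw [Real.norm_eq_abs, abs_lt] at hy'
      push_cast at hy'
      constructor
      · linarith [hy'.1]
      · linarith [hy'.2]
    have hres := hc y hmem
    have heqf : (fun n => (FormalMultilinearSeries.ofScalars ℝ c n) fun _ => y)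
        = (fun n => c n * y ^ n) := by
      funext n
      rw [FormalMultilinearSeries.ofScalars_apply_eq, smul_eq_mul]
    rw [heqf, zero_add]
    exact hres

lemma coeff_unique {a : ℕ → ℝ}
    (ha : ∀ t ∈ Ioo (-1 : ℝ) 1, HasSum (fun n => a n * t ^ n) (kappa1 t)) : a = co := by
  have h1 := hasFPS ha
  have h2 := hasFPS (fun t ht => hasSum_co ht)
  have hinj := FormalMultilinearSeries.ofScalars_series_injective (𝕜 := ℝ) (E := ℝ)
  exact hinj (h1.eq_formalMultilinearSeries h2)

lemma kappa1_continuous : Continuous kappa1 := by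
  unfold kappa1
  exact ((Real.continuous_sqrt.comp (continuous_const.sub (continuous_pow 2))).add
    ((continuous_const.sub Real.continuous_arccos).mul continuous_id)).div_const Real.pi

lemma hasDerivAt_kappa1 {x : ℝ} (hx : x ∈ Ioo (-1 : ℝ) 1) :
    HasDerivAt kappa1 ((Real.pi - Real.arccos x) / Real.pi) x := by
  have h1 := hasDerivAt_sqrt1 hx
  have hs : (0 : ℝ) < Real.sqrt (1 - x ^ 2) := Real.sqrt_pos.mpr (one_sub_sq_pos hx)
  have h2 : HasDerivAt (fun u : ℝ => Real.pi - Real.arccos u)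
      (-(-(1 / Real.sqrt (1 - x ^ 2)))) x :=
    (Real.hasDerivAt_arccos hx.1.ne' hx.2.ne).const_sub Real.pi
  have h3 := h2.mul (hasDerivAt_id x)
  have h4 := (h1.add h3).div_const Real.pi
  convert h4 using 1
  · rfl
  · rfl
  · rfl
  simp only [id_eq]
  field_simp
  ring

lemma kappa1_mono : MonotoneOn kappa1 (Icc (0 : ℝ) 1) := by
  apply monotoneOn_of_deriv_nonneg (convex_Icc 0 1) (kappa1_continuous.continuousOn)
  · intro x hx
    rw [interior_Icc] at hx
    have hx' : x ∈ Ioo (-1 : ℝ) 1 := ⟨by linarith [hx.1], hx.2⟩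
    exact (hasDerivAt_kappa1 hx').differentiableAt.differentiableWithinAt
  · intro x hx
    rw [interior_Icc] at hx
    have hx' : x ∈ Ioo (-1 : ℝ) 1 := ⟨by linarith [hx.1], hx.2⟩
    rw [(hasDerivAt_kappa1 hx').deriv]
    have h1 := Real.arccos_le_pi x
    have h2 := Real.pi_pos
    exact div_nonneg (by linarith) h2.le

lemma kappa1_le_one {t : ℝ} (ht : t ∈ Icc (0 : ℝ) 1) : kappa1 t ≤ 1 := by
  have := kappa1_mono ht (right_mem_Icc.mpr (by norm_num)) ht.2
  rwa [kappa1_one] at this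


end AK
end AK

/-- If `(aₙ)` are the Taylor coefficients of `κ₁` at `0`, then all `aₙ` are
nonnegative, `a₁ > 0`, and `∑ aₙ = κ₁(1) = 1`. -/
theorem stmt13 (a : ℕ → ℝ)
    (h : ∀ t ∈ Set.Ioo (-1 : ℝ) 1, HasSum (fun n => a n * t ^ n) (kappa1 t)) :
    (∀ n, 0 ≤ a n) ∧ 0 < a 1 ∧ HasSum a (kappa1 1) ∧ kappa1 1 = 1 := by
  have haco : a = AK.co := AK.coeff_unique h
  have hpos : ∀ n, 0 ≤ a n := fun n => haco ▸ AK.co_nonneg n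
  refine ⟨hpos, ?_, ?_, AK.kappa1_one⟩
  · rw [haco, AK.co_one]; norm_num
  · rw [AK.kappa1_one]
    have hIoo : Ioo (0 : ℝ) 1 ∈ 𝓝[<] (1 : ℝ) :=
      Ioo_mem_nhdsLT_of_mem (by norm_num : (1 : ℝ) ∈ Ioc (0 : ℝ) 1)
    have hub : ∀ N, ∑ n ∈ Finset.range N, a n ≤ 1 := by
      intro N
      have hcont : Continuous (fun t : ℝ => ∑ n ∈ Finset.range N, a n * t ^ n) := by
        apply continuous_finset_sum
        intro i _
        exact continuous_const.mul (continuous_pow i)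
      have hlim : Filter.Tendsto (fun t : ℝ => ∑ n ∈ Finset.range N, a n * t ^ n)
          (𝓝[<] (1 : ℝ)) (𝓝 (∑ n ∈ Finset.range N, a n)) := by
        have := (hcont.tendsto 1).mono_left (nhdsWithin_le_nhds (s := Iio (1 : ℝ)))
        simpa using this
      refine le_of_tendsto hlim ?_
      filter_upwards [hIoo] with t ht
      have hmem : t ∈ Ioo (-1 : ℝ) 1 := ⟨by linarith [ht.1], ht.2⟩
      calc ∑ n ∈ Finset.range N, a n * t ^ n
          ≤ ∑' n, a n * t ^ n := by
            refine Summable.sum_le_tsum _ (fun n _ => mul_nonneg (hpos n) (pow_nonneg ht.1.le n)) ?_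
            exact (h t hmem).summable
        _ = kappa1 t := (h t hmem).tsum_eq
        _ ≤ 1 := AK.kappa1_le_one ⟨ht.1.le, ht.2.le⟩
    have hsummable : Summable a := summable_of_sum_range_le hpos hub
    have h1 : ∑' n, a n ≤ 1 := Summable.tsum_le_of_sum_range_le hsummable hub
    have h2 : 1 ≤ ∑' n, a n := by
      have hlim : Filter.Tendsto kappa1 (𝓝[<] (1 : ℝ)) (𝓝 1) := by
        have := (AK.kappa1_continuous.tendsto 1).mono_left
          (nhdsWithin_le_nhds (s := Iio (1 : ℝ)))
        rwa [AK.kappa1_one] at this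
      refine le_of_tendsto hlim ?_
      filter_upwards [hIoo] with t ht
      have hmem : t ∈ Ioo (-1 : ℝ) 1 := ⟨by linarith [ht.1], ht.2⟩
      rw [← (h t hmem).tsum_eq]
      refine Summable.tsum_le_tsum (fun n => ?_) (h t hmem).summable hsummable
      have ht1 : t ^ n ≤ 1 := pow_le_one₀ ht.1.le ht.2.le
      calc a n * t ^ n ≤ a n * 1 := mul_le_mul_of_nonneg_left ht1 (hpos n)
        _ = a n := mul_one _
    have heq : ∑' n, a n = 1 := le_antisymm h1 h2
    exact heq ▸ hsummable.hasSum
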